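/- arXiv:2401.14561 — 12 statements merged into one kernel-verified Lean document; each statement's English description precedes it below -/
import Mathlib

section
/- Let x, u < 0 and y, r > 0 be real numbers with x + y ≤ 0, r + u ≤ 0 and x + y > r + u, and set s = √((u − x)² + 4ry). Define the 2×2 real matrices G0 = [[x, y], [r, u]], G1 = diag(−x−y, −r−u), and B = [[1, 0], [−(x − 2r − u − s)/(x + 2y − u + s), 2(x + y − u − r)/(x + 2y − u + s)]]. Then: (i) x + 2y − u + s > 0; (ii) B is invertible and B·e = e, where e = (1,1)ᵀ; and (iii) B⁻¹ G0 B = G0c and B⁻¹ G1 B = G1c, where G0c = [[x − y(x − 2r − u − s)/(x + 2y − u + s), −2y(r + u − x − y)/(x + 2y − u + s)], [0, u + y(x − 2r − u − s)/(x + 2y − u + s)]] and G1c = [[−x − y, 0], [−(x − 2r − u − s)/2, −r − u]]. In other words, the MMPP₂ representation {G0, G1} is equivalent (via a similarity transform by a matrix whose rows sum to one) to the canonical representation {G0c, G1c}. -/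
open Matrix

set_option maxHeartbeats 1000000 in
/-- The MMPP₂ representation {G0, G1} is similar, via a matrix B with rows summing to one,
to the canonical representation {G0c, G1c}. -/
theorem mmpp2_canonical_form
    (x y r u : ℝ) (hx : x < 0) (hu : u < 0) (hy : 0 < y) (hr : 0 < r)
    (hxy : x + y ≤ 0) (hru : r + u ≤ 0) (hgt : r + u < x + y)
    (s : ℝ) (hs : s = Real.sqrt ((u - x) ^ 2 + 4 * r * y))
    (G0 G1 B G0c G1c : Matrix (Fin 2) (Fin 2) ℝ)
    (hG0 : G0 = !![x, y; r, u])
    (hG1 : G1 = !![-x - y, 0; 0, -r - u])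
    (hB : B = !![1, 0;
      -(x - 2*r - u - s) / (x + 2*y - u + s), 2*(x + y - u - r) / (x + 2*y - u + s)])
    (hG0c : G0c = !![x - y * (x - 2*r - u - s) / (x + 2*y - u + s),
                      -2*y*(r + u - x - y) / (x + 2*y - u + s);
                     0, u + y * (x - 2*r - u - s) / (x + 2*y - u + s)])
    (hG1c : G1c = !![-x - y, 0; -(x - 2*r - u - s)/2, -r - u]) :
    0 < x + 2*y - u + s ∧
    IsUnit B ∧
    B.mulVec ![1, 1] = ![1, 1] ∧
    B⁻¹ * G0 * B = G0c ∧
    B⁻¹ * G1 * B = G1c := by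
  have hs2 : s ^ 2 = (u - x) ^ 2 + 4 * r * y := by
    rw [hs]; exact Real.sq_sqrt (by positivity)
  have hsge : u - x ≤ s := by
    rw [hs]
    calc u - x ≤ |u - x| := le_abs_self _
    _ = Real.sqrt ((u - x) ^ 2) := (Real.sqrt_sq_eq_abs _).symm
    _ ≤ _ := Real.sqrt_le_sqrt (by nlinarith)
  have hD : 0 < x + 2*y - u + s := by linarith
  have hD0 : x + 2*y - u + s ≠ 0 := ne_of_gt hD
  have hk : 0 < x + y - u - r := by linarith
  have hdet : B.det ≠ 0 := by
    rw [hB, Matrix.det_fin_two_of]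
    have h2 : 0 < 2*(x + y - u - r) / (x + 2*y - u + s) := by positivity
    have h2' : (1:ℝ) * (2*(x + y - u - r) / (x + 2*y - u + s)) -
        0 * (-(x - 2*r - u - s) / (x + 2*y - u + s)) =
        2*(x + y - u - r) / (x + 2*y - u + s) := by ring
    rw [h2']; exact ne_of_gt h2
  have hunit : IsUnit B := by
    rw [Matrix.isUnit_iff_isUnit_det, isUnit_iff_ne_zero]; exact hdet
  have h0 : G0 * B = B * G0c := by
    subst hG0 hB hG0c
    ext i j
    fin_cases i <;> fin_cases j <;>
        simp [Matrix.mul_apply, Fin.sum_univ_two]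
    · field_simp; ring
    · field_simp; ring
    · field_simp
      linear_combination (r - x + u - y) * hs2
    · field_simp; ring
  have h1 : G1 * B = B * G1c := by
    subst hG1 hB hG1c
    ext i j
    fin_cases i <;> fin_cases j <;>
        simp [Matrix.mul_apply, Fin.sum_univ_two] <;>
      field_simp <;> ring
  refine ⟨hD, hunit, ?_, ?_, ?_⟩
  · rw [hB]
    ext i
    fin_cases i <;>
        simp [Matrix.mulVec, dotProduct, Fin.sum_univ_two] <;>
      field_simp <;> ring
  · calc B⁻¹ * G0 * B = B⁻¹ * (G0 * B) := by rw [Matrix.mul_assoc]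
    _ = B⁻¹ * (B * G0c) := by rw [h0]
    _ = G0c := by
        rw [← Matrix.mul_assoc, Matrix.nonsing_inv_mul B (isUnit_iff_ne_zero.mpr hdet),
          Matrix.one_mul]
  · calc B⁻¹ * G1 * B = B⁻¹ * (G1 * B) := by rw [Matrix.mul_assoc]
    _ = B⁻¹ * (B * G1c) := by rw [h1]
    _ = G1c := by
        rw [← Matrix.mul_assoc, Matrix.nonsing_inv_mul B (isUnit_iff_ne_zero.mpr hdet),
          Matrix.one_mul]
end

section
/- Let x, y, r, u be real numbers with y ≥ 0, r ≥ 0, and set s = √((u − x)² + 4ry). If x + 2y − u + s ≠ 0, then x − y(x − 2r − u − s)/(x + 2y − u + s) = (x + u + s)/2 and u + y(x − 2r − u − s)/(x + 2y − u + s) = (x + u − s)/2. Consequently, the two diagonal entries of the canonical matrix G0c obtained from G0 = [[x, y], [r, u]] are exactly the two eigenvalues of G0, i.e., the roots of λ² − (x + u)λ + (xu − ry) = 0. -/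
open Matrix

/-- The diagonal entries of the canonical matrix G0c equal (x+u±s)/2, which are
the eigenvalues of G0, i.e. the roots of λ² − (x+u)λ + (xu − ry) = 0. -/
theorem canonical_diag_entries_are_eigenvalues
    (x y r u s : ℝ) (hy : 0 ≤ y) (hr : 0 ≤ r)
    (hs : s = Real.sqrt ((u - x) ^ 2 + 4 * r * y))
    (hne : x + 2*y - u + s ≠ 0) :
    x - y * (x - 2*r - u - s) / (x + 2*y - u + s) = (x + u + s) / 2 ∧
    u + y * (x - 2*r - u - s) / (x + 2*y - u + s) = (x + u - s) / 2 ∧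
    ((x + u + s)/2)^2 - (x + u) * ((x + u + s)/2) + (x*u - r*y) = 0 ∧
    ((x + u - s)/2)^2 - (x + u) * ((x + u - s)/2) + (x*u - r*y) = 0 := by
  have hs2 : s ^ 2 = (u - x) ^ 2 + 4 * r * y := by
    rw [hs]; exact Real.sq_sqrt (by positivity)
  refine ⟨?_, ?_, ?_, ?_⟩
  · rw [sub_div' hne, div_eq_div_iff hne two_ne_zero]
    linear_combination -hs2
  · rw [add_div' _ _ _ hne, div_eq_div_iff hne two_ne_zero]
    linear_combination hs2
  · linear_combination hs2 / 4
  · linear_combination hs2 / 4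
end

section
/- Let x, u < 0 and y, r > 0 be real numbers with x + y ≤ 0, r + u < 0 and x + y ≥ r + u, and set s = √((u − x)² + 4ry), ζ1 = −(x + u + s)/2 and ζ2 = −(x + u − s)/2. Then the canonical representation {G0c, G1c} of the MMPP₂ {G0 = [[x, y], [r, u]], G1 = diag(−x−y, −r−u)} is a well-defined canonical MAP₂ form with positive exponential rates and valid probabilities: (i) ζ1 > 0 and ζ2 > 0 (equivalently, both diagonal entries of G0c are negative); (ii) a := (−x − y)/ζ1 ∈ [0, 1] and b := (−r − u)/ζ2 ∈ [0, 1]; (iii) the off-diagonal entry of G0c, namely −2y(r + u − x − y)/(x + 2y − u + s), is nonnegative; (iv) all entries of G1c, namely −x − y, −(x − 2r − u − s)/2 and −r − u, are nonnegative; and (v) every row of G0c + G1c sums to zero. -/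
open Matrix

/-- The canonical representation of an MMPP₂ is a well-defined canonical MAP₂ form:
positive rates, probabilities in [0,1], nonnegative off-diagonal entry of G0c,
nonnegative entries of G1c, and zero row sums of G0c + G1c. -/
theorem mmpp2_canonical_form_well_defined
    (x y r u : ℝ) (hx : x < 0) (hu : u < 0) (hy : 0 < y) (hr : 0 < r)
    (hxy : x + y ≤ 0) (hru : r + u < 0) (hord : r + u ≤ x + y)
    (s ζ1 ζ2 a b : ℝ)
    (hs : s = Real.sqrt ((u - x) ^ 2 + 4 * r * y))
    (hz1 : ζ1 = -(x + u + s)/2) (hz2 : ζ2 = -(x + u - s)/2)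
    (ha : a = (-x - y)/ζ1) (hb : b = (-r - u)/ζ2)
    (G0c G1c : Matrix (Fin 2) (Fin 2) ℝ)
    (hG0c : G0c = !![x - y * (x - 2*r - u - s) / (x + 2*y - u + s),
                      -2*y*(r + u - x - y) / (x + 2*y - u + s);
                     0, u + y * (x - 2*r - u - s) / (x + 2*y - u + s)])
    (hG1c : G1c = !![-x - y, 0; -(x - 2*r - u - s)/2, -r - u]) :
    0 < ζ1 ∧ 0 < ζ2 ∧
    G0c 0 0 < 0 ∧ G0c 1 1 < 0 ∧
    a ∈ Set.Icc (0:ℝ) 1 ∧ b ∈ Set.Icc (0:ℝ) 1 ∧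
    0 ≤ -2*y*(r + u - x - y) / (x + 2*y - u + s) ∧
    0 ≤ -x - y ∧ 0 ≤ -(x - 2*r - u - s)/2 ∧ 0 ≤ -r - u ∧
    (∀ i, ∑ j, (G0c + G1c) i j = 0) := by
  have hA : (0:ℝ) ≤ (u - x) ^ 2 + 4 * r * y := by nlinarith [sq_nonneg (u - x)]
  have hs0 : 0 ≤ s := hs ▸ Real.sqrt_nonneg _
  have hs2 : s ^ 2 = (u - x) ^ 2 + 4 * r * y := by rw [hs]; exact Real.sq_sqrt hA
  -- s < -(x+u)
  have hslt : s < -(x + u) := by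
    nlinarith [hs2, hs0, sq_nonneg (s + (x + u)), mul_pos hr hy]
  -- s ≤ x - u + 2y
  have hsle : s ≤ x - u + 2 * y := by
    nlinarith [hs2, hs0, sq_nonneg (s - (x - u + 2*y))]
  -- x - u - 2r ≤ s
  have hge1 : x - u - 2 * r ≤ s := by
    nlinarith [hs2, hs0, sq_nonneg (s - (x - u - 2*r))]
  -- u - x ≤ s
  have hge2 : u - x ≤ s := by
    nlinarith [hs2, hs0, sq_nonneg (s - (u - x))]
  have hD : 0 < x + 2 * y - u + s := by linarith
  have hDne : x + 2 * y - u + s ≠ 0 := ne_of_gt hD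
  have key : y * (x - 2*r - u - s) = ((x - u - s)/2) * (x + 2*y - u + s) := by
    linear_combination (1/2) * hs2
  have hq : y * (x - 2*r - u - s) / (x + 2*y - u + s) = (x - u - s)/2 := by
    rw [key, mul_div_assoc, div_self hDne, mul_one]
  have heq1 : x - y * (x - 2*r - u - s) / (x + 2*y - u + s) = (x + u + s) / 2 := by
    rw [hq]; ring
  have heq2 : u + y * (x - 2*r - u - s) / (x + 2*y - u + s) = (x + u - s) / 2 := by
    rw [hq]; ring
  have heqoff : -2*y*(r + u - x - y) / (x + 2*y - u + s) = (x + 2*y - u - s) / 2 := by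
    rw [div_eq_div_iff hDne (by norm_num : (2:ℝ) ≠ 0)]
    linear_combination hs2
  have hz1pos : 0 < ζ1 := by rw [hz1]; linarith
  have hz2pos : 0 < ζ2 := by rw [hz2]; linarith
  refine ⟨hz1pos, hz2pos, ?_, ?_, ?_, ?_, ?_, by linarith, by linarith, by linarith, ?_⟩
  · rw [hG0c]
    simp only [Matrix.cons_val', Matrix.cons_val_zero, Matrix.empty_val',
      Matrix.cons_val_fin_one, Matrix.of_apply]
    rw [heq1]; linarith
  · rw [hG0c]
    simp only [Matrix.cons_val', Matrix.cons_val_one, Matrix.head_cons,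
      Matrix.empty_val', Matrix.cons_val_fin_one, Matrix.head_fin_const,
      Matrix.of_apply, Matrix.cons_val_zero]
    rw [heq2]; linarith
  · constructor
    · rw [ha]
      exact div_nonneg (by linarith) (le_of_lt hz1pos)
    · rw [ha, div_le_one hz1pos, hz1]; linarith
  · constructor
    · rw [hb]
      exact div_nonneg (by linarith) (le_of_lt hz2pos)
    · rw [hb, div_le_one hz2pos, hz2]; linarith
  · rw [heqoff]; linarith
  · intro i
    subst hG0c hG1c
    fin_cases i <;> simp [Fin.sum_univ_two]
    · have heqoff2 : -(2*y*(r + u - x - y)) / (x + 2*y - u + s) = (x + 2*y - u - s) / 2 := by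
        rw [show -(2*y*(r + u - x - y)) = -2*y*(r + u - x - y) from by ring]; exact heqoff
      linarith [heq1, heqoff2]
    · linarith [heq2]
end

section
/- Let ζ1, ζ2 > 0 and a, b ∈ [0, 1] be real numbers with aζ1 < bζ2 and ζ1 ≤ bζ2. Define the 2×2 real matrices G0 = (1/(aζ1 − bζ2))·[[ζ1ζ2 − aζ1² − aζ1ζ2 + abζ1ζ2, −a²ζ1² + aζ1² + aζ1ζ2 − ζ1ζ2], [(ζ1 − bζ2)(ζ2 − bζ2), −ζ1ζ2 + bζ2² + bζ1ζ2 − abζ1ζ2]] and G1 = diag(aζ1, bζ2). Then {G0, G1} is a well-defined MMPP₂ rate representation: both diagonal entries of G0 are ≤ 0, both off-diagonal entries of G0 are ≥ 0, both diagonal entries of G1 are ≥ 0, and every row of G0 + G1 sums to zero. -/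
open Matrix

/-- The Lemma-2 reconstruction formulas produce a well-defined MMPP₂ rate
representation: nonpositive diagonal and nonnegative off-diagonal entries of G0,
nonnegative diagonal G1, and zero row sums of G0 + G1. -/
theorem reconstruction_is_mmpp2
    (ζ1 ζ2 a b : ℝ) (h1 : 0 < ζ1) (h2 : 0 < ζ2)
    (ha : a ∈ Set.Icc (0:ℝ) 1) (hb : b ∈ Set.Icc (0:ℝ) 1)
    (hab : a*ζ1 < b*ζ2) (h1b : ζ1 ≤ b*ζ2)
    (G0 G1 : Matrix (Fin 2) (Fin 2) ℝ)
    (hG0 : G0 = (1/(a*ζ1 - b*ζ2)) •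
      !![ζ1*ζ2 - a*ζ1^2 - a*ζ1*ζ2 + a*b*ζ1*ζ2,
         -a^2*ζ1^2 + a*ζ1^2 + a*ζ1*ζ2 - ζ1*ζ2;
         (ζ1 - b*ζ2)*(ζ2 - b*ζ2),
         -ζ1*ζ2 + b*ζ2^2 + b*ζ1*ζ2 - a*b*ζ1*ζ2])
    (hG1 : G1 = !![a*ζ1, 0; 0, b*ζ2]) :
    G0 0 0 ≤ 0 ∧ G0 1 1 ≤ 0 ∧ 0 ≤ G0 0 1 ∧ 0 ≤ G0 1 0 ∧
    0 ≤ G1 0 0 ∧ 0 ≤ G1 1 1 ∧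
    (∀ i, ∑ j, (G0 + G1) i j = 0) := by
  obtain ⟨ha0, ha1⟩ := ha
  obtain ⟨hb0, hb1⟩ := hb
  have hbz : b*ζ2 ≤ ζ2 := by nlinarith
  have hd : a*ζ1 - b*ζ2 < 0 := by linarith
  have hdne : a*ζ1 - b*ζ2 ≠ 0 := ne_of_lt hd
  have hinv : 1/(a*ζ1 - b*ζ2) ≤ 0 := by
    apply div_nonpos_of_nonneg_of_nonpos <;> linarith
  subst hG0 hG1
  refine ⟨?_, ?_, ?_, ?_, ?_, ?_, ?_⟩
  · simp only [Matrix.smul_apply, Matrix.cons_val', Matrix.cons_val_zero,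
      Matrix.empty_val', Matrix.cons_val_fin_one, smul_eq_mul]
    have hnum : 0 ≤ ζ1*ζ2 - a*ζ1^2 - a*ζ1*ζ2 + a*b*ζ1*ζ2 := by
      nlinarith [mul_nonneg ha0 (sub_nonneg.mpr h1b), mul_nonneg (sub_nonneg.mpr ha1) h2.le]
    exact mul_nonpos_of_nonpos_of_nonneg hinv hnum
  · simp only [Matrix.smul_apply, Matrix.cons_val', Matrix.cons_val_one, Matrix.head_cons,
      Matrix.empty_val', Matrix.cons_val_fin_one, Matrix.head_fin_const, smul_eq_mul]
    have hnum : 0 ≤ -ζ1*ζ2 + b*ζ2^2 + b*ζ1*ζ2 - a*b*ζ1*ζ2 := by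
      nlinarith [mul_nonneg hb0 (mul_nonneg (sub_nonneg.mpr ha1) h1.le)]
    exact mul_nonpos_of_nonpos_of_nonneg hinv hnum
  · simp only [Matrix.smul_apply, Matrix.cons_val', Matrix.cons_val_zero, Matrix.cons_val_one,
      Matrix.head_cons, Matrix.empty_val', Matrix.cons_val_fin_one, smul_eq_mul]
    have hnum : -a^2*ζ1^2 + a*ζ1^2 + a*ζ1*ζ2 - ζ1*ζ2 ≤ 0 := by
      nlinarith [mul_nonneg (sub_nonneg.mpr ha1)
        (mul_nonneg h1.le (by linarith : (0:ℝ) ≤ ζ2 - a*ζ1))]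
    exact mul_nonneg_iff.mpr (Or.inr ⟨hinv, hnum⟩)
  · simp only [Matrix.smul_apply, Matrix.cons_val', Matrix.cons_val_zero, Matrix.cons_val_one,
      Matrix.head_cons, Matrix.empty_val', Matrix.cons_val_fin_one, smul_eq_mul]
    have hnum : (ζ1 - b*ζ2)*(ζ2 - b*ζ2) ≤ 0 := by
      apply mul_nonpos_of_nonpos_of_nonneg
      · linarith
      · nlinarith
    exact mul_nonneg_iff.mpr (Or.inr ⟨hinv, hnum⟩)
  · show (0:ℝ) ≤ a*ζ1
    positivity
  · show (0:ℝ) ≤ b*ζ2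
    positivity
  · intro i
    fin_cases i <;>
    · simp [Fin.sum_univ_two, Matrix.add_apply, Matrix.smul_apply]
      field_simp
      ring
end

section
/- Let x, u < 0 and y, r > 0 be real numbers with x + y ≤ 0, r + u < 0 and x + y > r + u. Set s = √((u − x)² + 4ry), ζ1 = −(x + u + s)/2, ζ2 = −(x + u − s)/2, a = (−x − y)/ζ1 and b = (−r − u)/ζ2. Then aζ1 − bζ2 = (r + u) − (x + y) ≠ 0, and the Lemma-2 reconstruction formulas applied to (ζ1, ζ2, a, b) recover the original representation; explicitly: (ζ1ζ2 − aζ1² − aζ1ζ2 + abζ1ζ2)/(aζ1 − bζ2) = x, (−a²ζ1² + aζ1² + aζ1ζ2 − ζ1ζ2)/(aζ1 − bζ2) = y, (ζ1 − bζ2)(ζ2 − bζ2)/(aζ1 − bζ2) = r, (−ζ1ζ2 + bζ2² + bζ1ζ2 − abζ1ζ2)/(aζ1 − bζ2) = u, and diag(aζ1, bζ2) = diag(−x − y, −r − u). -/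
open Matrix

/-- The Lemma-2 reconstruction formulas applied to the canonical parameters of an
MMPP₂ recover the original representation. -/
theorem reconstruction_recovers_mmpp2
    (x y r u : ℝ) (hx : x < 0) (hu : u < 0) (hy : 0 < y) (hr : 0 < r)
    (hxy : x + y ≤ 0) (hru : r + u < 0) (hgt : r + u < x + y)
    (s ζ1 ζ2 a b : ℝ)
    (hs : s = Real.sqrt ((u - x) ^ 2 + 4 * r * y))
    (hz1 : ζ1 = -(x + u + s)/2) (hz2 : ζ2 = -(x + u - s)/2)
    (ha : a = (-x - y)/ζ1) (hb : b = (-r - u)/ζ2) :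
    a*ζ1 - b*ζ2 = (r + u) - (x + y) ∧
    (r + u) - (x + y) ≠ 0 ∧
    (ζ1*ζ2 - a*ζ1^2 - a*ζ1*ζ2 + a*b*ζ1*ζ2)/(a*ζ1 - b*ζ2) = x ∧
    (-a^2*ζ1^2 + a*ζ1^2 + a*ζ1*ζ2 - ζ1*ζ2)/(a*ζ1 - b*ζ2) = y ∧
    ((ζ1 - b*ζ2)*(ζ2 - b*ζ2))/(a*ζ1 - b*ζ2) = r ∧
    (-ζ1*ζ2 + b*ζ2^2 + b*ζ1*ζ2 - a*b*ζ1*ζ2)/(a*ζ1 - b*ζ2) = u ∧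
    Matrix.diagonal ![a*ζ1, b*ζ2] = Matrix.diagonal ![-x - y, -r - u] := by
  have hsnn : 0 ≤ s := hs ▸ Real.sqrt_nonneg _
  have hs2 : s ^ 2 = (u - x) ^ 2 + 4 * r * y := by
    rw [hs, Real.sq_sqrt]
    positivity
  -- r*y < x*u
  have hry : r * y < x * u := by nlinarith
  -- s < -(x+u), hence ζ1 > 0
  have hslt : s < -(x + u) := by nlinarith [sq_nonneg (s + (x + u))]
  have hz1pos : 0 < ζ1 := by rw [hz1]; linarith
  have hz2pos : 0 < ζ2 := by rw [hz2]; linarith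
  have hz1ne : ζ1 ≠ 0 := ne_of_gt hz1pos
  have hz2ne : ζ2 ≠ 0 := ne_of_gt hz2pos
  have hA : a * ζ1 = -x - y := by rw [ha, div_mul_cancel₀ _ hz1ne]
  have hB : b * ζ2 = -r - u := by rw [hb, div_mul_cancel₀ _ hz2ne]
  have hP : ζ1 * ζ2 = x * u - r * y := by
    rw [hz1, hz2]; linear_combination (-1/4 : ℝ) * hs2
  have hS : ζ1 + ζ2 = -(x + u) := by rw [hz1, hz2]; ring
  have hD : a * ζ1 - b * ζ2 = (r + u) - (x + y) := by
    rw [hA, hB]; ring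
  have hDne : a * ζ1 - b * ζ2 ≠ 0 := by rw [hD]; linarith
  have hDne' : (r + u) - (x + y) ≠ 0 := by linarith
  refine ⟨hD, hDne', ?_, ?_, ?_, ?_, ?_⟩
  · rw [div_eq_iff hDne]
    linear_combination (-(ζ1 + ζ2) + b*ζ2 - x) * hA + (-y) * hB + hP + (x + y) * hS
  · rw [div_eq_iff hDne]
    linear_combination (-(a*ζ1) + ζ1 + ζ2 + x) * hA + y * hB + (-1 : ℝ) * hP + (-(x + y)) * hS
  · rw [div_eq_iff hDne]
    linear_combination (-r) * hA + (b*ζ2 - ζ1 - ζ2 - u) * hB + hP + (r + u) * hS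
  · rw [div_eq_iff hDne]
    linear_combination (-(b*ζ2) - u) * hA + (ζ1 + ζ2 + u + x + y) * hB + (-1 : ℝ) * hP + (-(r + u)) * hS
  · rw [hA, hB]
end

section
/- Let ζ1, ζ2 > 0, a, b ∈ [0, 1) be real numbers with aζ1 < bζ2 and ζ1 < bζ2. Let {G0, G1} be given by the Lemma-2 reconstruction formulas, i.e., G0 = (1/(aζ1 − bζ2))·[[ζ1ζ2 − aζ1² − aζ1ζ2 + abζ1ζ2, −a²ζ1² + aζ1² + aζ1ζ2 − ζ1ζ2], [(ζ1 − bζ2)(ζ2 − bζ2), −ζ1ζ2 + bζ2² + bζ1ζ2 − abζ1ζ2]] and G1 = diag(aζ1, bζ2). Then there exists an invertible 2×2 real matrix A with A·e = e (e the all-ones column vector) such that A G0 A⁻¹ = [[−ζ1, (1−a)ζ1], [0, −ζ2]] and A G1 A⁻¹ = [[aζ1, 0], [(1−b)ζ2, bζ2]]; that is, {G0, G1} is equivalent to the canonical form with parameters (ζ1, ζ2, a, b). -/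
open Matrix

/-- The MMPP₂ given by the Lemma-2 reconstruction formulas is equivalent (via an
invertible matrix A with A·e = e) to the canonical form with parameters (ζ1, ζ2, a, b). -/
theorem reconstruction_equivalent_to_canonical
    (ζ1 ζ2 a b : ℝ) (h1 : 0 < ζ1) (h2 : 0 < ζ2)
    (ha : a ∈ Set.Ico (0:ℝ) 1) (hb : b ∈ Set.Ico (0:ℝ) 1)
    (hab : a*ζ1 < b*ζ2) (h1b : ζ1 < b*ζ2)
    (G0 G1 : Matrix (Fin 2) (Fin 2) ℝ)
    (hG0 : G0 = (1/(a*ζ1 - b*ζ2)) •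
      !![ζ1*ζ2 - a*ζ1^2 - a*ζ1*ζ2 + a*b*ζ1*ζ2,
         -a^2*ζ1^2 + a*ζ1^2 + a*ζ1*ζ2 - ζ1*ζ2;
         (ζ1 - b*ζ2)*(ζ2 - b*ζ2),
         -ζ1*ζ2 + b*ζ2^2 + b*ζ1*ζ2 - a*b*ζ1*ζ2])
    (hG1 : G1 = !![a*ζ1, 0; 0, b*ζ2]) :
    ∃ A : Matrix (Fin 2) (Fin 2) ℝ, IsUnit A ∧
      A.mulVec ![1, 1] = ![1, 1] ∧
      A * G0 * A⁻¹ = !![-ζ1, (1-a)*ζ1; 0, -ζ2] ∧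
      A * G1 * A⁻¹ = !![a*ζ1, 0; (1-b)*ζ2, b*ζ2] := by
  have hd : a*ζ1 - b*ζ2 < 0 := by linarith
  have hd0 : a*ζ1 - b*ζ2 ≠ 0 := ne_of_lt hd
  set q : ℝ := (1-b)*ζ2 / (a*ζ1 - b*ζ2) with hq
  have hqneg : q < 0 := by
    apply div_neg_of_pos_of_neg _ hd
    have := hb.2
    nlinarith
  have h1q : (1:ℝ) - q ≠ 0 := by linarith
  refine ⟨!![1, 0; q, 1-q], ?_, ?_, ?_, ?_⟩
  · rw [Matrix.isUnit_iff_isUnit_det]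
    simp [Matrix.det_fin_two_of]
    exact h1q
  · funext i
    fin_cases i <;> simp [Matrix.mulVec, dotProduct, Fin.sum_univ_two] <;> ring
  · have hA : IsUnit (!![1, 0; q, 1-q] : Matrix (Fin 2) (Fin 2) ℝ).det := by
      simp [Matrix.det_fin_two_of]
      exact h1q
    have key : !![1, 0; q, 1-q] * G0 = !![-ζ1, (1-a)*ζ1; 0, -ζ2] * !![1, 0; q, 1-q] := by
      subst hG0
      ext i j
      fin_cases i <;> fin_cases j <;>
        simp [Matrix.mul_apply, Fin.sum_univ_two, hq] <;> field_simp <;> ring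
    calc !![1, 0; q, 1-q] * G0 * (!![1, 0; q, 1-q])⁻¹
        = !![-ζ1, (1-a)*ζ1; 0, -ζ2] * (!![1, 0; q, 1-q] * (!![1, 0; q, 1-q])⁻¹) := by
          rw [key, Matrix.mul_assoc]
      _ = !![-ζ1, (1-a)*ζ1; 0, -ζ2] := by rw [Matrix.mul_nonsing_inv _ hA, Matrix.mul_one]
  · have hA : IsUnit (!![1, 0; q, 1-q] : Matrix (Fin 2) (Fin 2) ℝ).det := by
      simp [Matrix.det_fin_two_of]
      exact h1q
    have key : !![1, 0; q, 1-q] * G1 = !![a*ζ1, 0; (1-b)*ζ2, b*ζ2] * !![1, 0; q, 1-q] := by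
      subst hG1
      ext i j
      fin_cases i <;> fin_cases j <;>
        simp [Matrix.mul_apply, Fin.sum_univ_two, hq] <;> field_simp <;> ring
    calc !![1, 0; q, 1-q] * G1 * (!![1, 0; q, 1-q])⁻¹
        = !![a*ζ1, 0; (1-b)*ζ2, b*ζ2] * (!![1, 0; q, 1-q] * (!![1, 0; q, 1-q])⁻¹) := by
          rw [key, Matrix.mul_assoc]
      _ = !![a*ζ1, 0; (1-b)*ζ2, b*ζ2] := by rw [Matrix.mul_nonsing_inv _ hA, Matrix.mul_one]
end

section
/- Let x, y, r, u, w, q be real numbers with r + y ≠ 0, xu − ry ≠ 0 and rx + 2ry + yu ≠ 0. Define the 2×2 real matrices D0 = [[x, y], [r, u]], D1 = diag(w, q), D2 = diag(−x − y − w, −r − u − q), D = D1 + D2 = diag(−x − y, −r − u); let e = (1,1)ᵀ, let π be the row vector (r/(r+y), y/(r+y)), and let φ = (π D e)⁻¹ · (π D) (note π D e = −(rx + 2ry + yu)/(r + y) ≠ 0, so φ is well defined). Then the mean batch size satisfies β1 := φ (−D0)⁻¹ (D1 + 2·D2) e = (2(rx + 2ry + yu) + rw + yq) / (rx + 2ry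 + yu). -/
open Matrix

/-- Mean batch size of a BMMPP₂(2): β1 = φ(−D0)⁻¹(D1 + 2D2)e
    = (2(rx + 2ry + yu) + rw + yq)/(rx + 2ry + yu). -/
theorem bmmpp2_mean_batch_size
    (x y r u w q : ℝ) (hry : r + y ≠ 0) (hdet : x*u - r*y ≠ 0)
    (hM : r*x + 2*r*y + y*u ≠ 0)
    (D0 D1 D2 D : Matrix (Fin 2) (Fin 2) ℝ)
    (hD0 : D0 = !![x, y; r, u]) (hD1 : D1 = !![w, 0; 0, q])
    (hD2 : D2 = !![-x - y - w, 0; 0, -r - u - q]) (hD : D = D1 + D2)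
    (e : Fin 2 → ℝ) (he : e = ![1, 1])
    (π : Fin 2 → ℝ) (hπ : π = ![r/(r+y), y/(r+y)])
    (φ : Fin 2 → ℝ) (hφ : φ = (π ⬝ᵥ D.mulVec e)⁻¹ • Matrix.vecMul π D) :
    π ⬝ᵥ D.mulVec e = -(r*x + 2*r*y + y*u)/(r + y) ∧
    Matrix.vecMul φ ((-D0)⁻¹ * (D1 + (2:ℝ) • D2)) ⬝ᵥ e
      = (2*(r*x + 2*r*y + y*u) + r*w + y*q) / (r*x + 2*r*y + y*u) := by
  have hinv : (-D0)⁻¹ = (x*u - r*y)⁻¹ • !![-u, y; r, -x] := by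
    subst hD0
    have h : -(!![x, y; r, u] : Matrix (Fin 2) (Fin 2) ℝ) = !![-x, -y; -r, -u] := by
      ext i j; fin_cases i <;> fin_cases j <;> simp
    rw [h, Matrix.inv_def, Matrix.adjugate_fin_two, Matrix.det_fin_two_of,
      Ring.inverse_eq_inv]
    have h2 : -x * -u - -y * -r = x*u - r*y := by ring
    rw [h2]
    congr 1
    ext i j; fin_cases i <;> fin_cases j <;> simp
  have h1 : π ⬝ᵥ D.mulVec e = -(r*x + 2*r*y + y*u)/(r + y) := by
    subst hD hD1 hD2 he hπ
    simp [Matrix.mulVec, dotProduct, Fin.sum_univ_two]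
    field_simp
    ring
  refine ⟨h1, ?_⟩
  have h1' : (π ⬝ᵥ D.mulVec e)⁻¹ = -(r+y)/(r*x + 2*r*y + y*u) := by
    rw [h1, inv_div, div_neg, neg_div]
  subst hφ
  rw [h1', hinv]
  subst hD hD0 hD1 hD2 he hπ
  set A := (x*u - r*y)⁻¹ with hA
  set B := (-(r+y)/(r*x + 2*r*y + y*u)) with hB
  simp only [Matrix.vecMul, Matrix.mulVec, dotProduct, Fin.sum_univ_two,
    Matrix.mul_apply, Matrix.smul_apply, Matrix.add_apply, Pi.smul_apply,
    Matrix.cons_val', Matrix.cons_val_zero, Matrix.cons_val_one, Matrix.head_cons,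
    Matrix.head_fin_const, Matrix.empty_val', Matrix.cons_val_fin_one,
    Matrix.head_fin_const, smul_eq_mul, Matrix.cons_val_fin_one, Matrix.of_apply]
  rw [hA, hB]
  field_simp
  ring
end

section
/- Let x, y, r, u, w, q be real numbers with r + y ≠ 0, xu − ry ≠ 0 and rx + 2ry + yu ≠ 0. Define D0 = [[x, y], [r, u]], D1 = diag(w, q), D2 = diag(−x − y − w, −r − u − q), D = D1 + D2, e = (1,1)ᵀ, π = (r/(r+y), y/(r+y)) and φ = (π D e)⁻¹ · (π D). Then the joint moment satisfies η := φ (−D0)⁻¹ (−D0)⁻¹ (D1 + 2·D2) e = (rw(y − u) + qy(r − x) + (ry − xu)(2r + 2y)) / ((rx + 2ry + yu)(xu − ry)). -/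
set_option maxHeartbeats 2000000
open Matrix

/-- Joint moment of a BMMPP₂(2): η = φ(−D0)⁻²(D1 + 2D2)e
    = (rw(y−u) + qy(r−x) + (ry−xu)(2r+2y))/((rx+2ry+yu)(xu−ry)). -/
theorem bmmpp2_joint_moment
    (x y r u w q : ℝ) (hry : r + y ≠ 0) (hdet : x*u - r*y ≠ 0)
    (hM : r*x + 2*r*y + y*u ≠ 0)
    (D0 D1 D2 D : Matrix (Fin 2) (Fin 2) ℝ)
    (hD0 : D0 = !![x, y; r, u]) (hD1 : D1 = !![w, 0; 0, q])
    (hD2 : D2 = !![-x - y - w, 0; 0, -r - u - q]) (hD : D = D1 + D2)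
    (e : Fin 2 → ℝ) (he : e = ![1, 1])
    (π : Fin 2 → ℝ) (hπ : π = ![r/(r+y), y/(r+y)])
    (φ : Fin 2 → ℝ) (hφ : φ = (π ⬝ᵥ D.mulVec e)⁻¹ • Matrix.vecMul π D) :
    Matrix.vecMul φ ((-D0)⁻¹ * (-D0)⁻¹ * (D1 + (2:ℝ) • D2)) ⬝ᵥ e
      = (r*w*(y - u) + q*y*(r - x) + (r*y - x*u)*(2*r + 2*y))
          / ((r*x + 2*r*y + y*u)*(x*u - r*y)) := by
  have hnegD0 : -D0 = !![-x, -y; -r, -u] := by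
    subst hD0; ext i j; fin_cases i <;> fin_cases j <;> simp
  have hdet' : (-D0).det = x*u - r*y := by
    rw [hnegD0, Matrix.det_fin_two_of]; ring
  have hinv : (-D0)⁻¹ = (x*u - r*y)⁻¹ • !![-u, y; r, -x] := by
    rw [Matrix.inv_def, hdet', hnegD0, Matrix.adjugate_fin_two_of]
    congr 1
    · simp [Ring.inverse_eq_inv]
    · ext i j; fin_cases i <;> fin_cases j <;> simp
  subst hπ he hD hD1 hD2
  have hc : (![r / (r + y), y / (r + y)] ⬝ᵥ (!![w, 0; 0, q] + !![-x - y - w, 0; 0, -r - u - q]) *ᵥ ![1, 1]) = -(r*x + 2*r*y + y*u)/(r+y) := by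
    simp only [Matrix.mulVec, dotProduct, Fin.sum_univ_two, Matrix.add_apply,
      Matrix.cons_val', Matrix.cons_val_zero, Matrix.cons_val_one, Matrix.head_cons,
      Matrix.empty_val', Matrix.cons_val_fin_one, Matrix.of_apply]
    field_simp
    ring
  rw [hφ, hc, hinv]
  rw [show (-(r*x + 2*r*y + y*u)/(r+y))⁻¹ = -(r+y)/(r*x + 2*r*y + y*u) by
    rw [inv_div, div_neg, neg_div]]
  simp only [Matrix.smul_mul, Matrix.mul_smul, Matrix.smul_vecMul,
    smul_dotProduct, smul_eq_mul]
  have h2 : (2:ℝ) • !![-x - y - w, 0; 0, -r - u - q] =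
      !![2*(-x - y - w), 0; 0, 2*(-r - u - q)] := by
    ext i j; fin_cases i <;> fin_cases j <;> norm_num
  rw [h2]
  simp only [Matrix.vecMul, Matrix.mulVec, dotProduct, Fin.sum_univ_two,
    Matrix.add_apply, Matrix.cons_val', Matrix.cons_val_zero, Matrix.cons_val_one,
    Matrix.head_cons, Matrix.empty_val', Matrix.cons_val_fin_one, Matrix.head_fin_const,
    Matrix.mul_apply, Matrix.cons_mulVec, Matrix.of_apply, Matrix.smul_apply, smul_eq_mul]
  field_simp
  ring
end

section
/- Let x, y, r, u be real numbers with y ≠ 0, r ≠ 0, r + u − x − y ≠ 0, xu − ry ≠ 0 and rx + 2ry + yu ≠ 0, and let β1, η, w, q be real numbers satisfying β1 = (2(rx + 2ry + yu) + rw + yq) / (rx + 2ry + yu) and η = (rw(y − u) + qy(r − x) + (ry − xu)(2r + 2y)) / ((rx + 2ry + yu)(xu − ry)). Then w and q are uniquely determined by (x, y, r, u, β1, η); explicitly, q = ((rx + 2ry + yu)·((xu − ry)η − (y − u)(β1 − 2)) − (ry − xu)(2r + 2y)) / (y(r + u − x − y)) and w = ((rx + 2ry + yu)·((β1 − 2)(r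 − x) − (xu − ry)η) + (ry − xu)(2r + 2y)) / (r(r + u − x − y)). -/
/-- Given D0 (i.e. x, y, r, u) and the moments β1 and η of a BMMPP₂(2), the
remaining parameters w and q are uniquely determined by the explicit formulas. -/
theorem bmmpp2_w_q_from_moments
    (x y r u : ℝ) (hy : y ≠ 0) (hr : r ≠ 0) (hd : r + u - x - y ≠ 0)
    (hdet : x*u - r*y ≠ 0) (hM : r*x + 2*r*y + y*u ≠ 0)
    (β1 η w q : ℝ)
    (hβ : β1 = (2*(r*x + 2*r*y + y*u) + r*w + y*q) / (r*x + 2*r*y + y*u))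
    (hη : η = (r*w*(y - u) + q*y*(r - x) + (r*y - x*u)*(2*r + 2*y))
                / ((r*x + 2*r*y + y*u)*(x*u - r*y))) :
    q = ((r*x + 2*r*y + y*u)*((x*u - r*y)*η - (y - u)*(β1 - 2))
          - (r*y - x*u)*(2*r + 2*y)) / (y*(r + u - x - y)) ∧
    w = ((r*x + 2*r*y + y*u)*((β1 - 2)*(r - x) - (x*u - r*y)*η)
          + (r*y - x*u)*(2*r + 2*y)) / (r*(r + u - x - y)) := by
  rw [eq_div_iff hM] at hβ
  rw [eq_div_iff (mul_ne_zero hM hdet)] at hη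
  constructor
  · rw [eq_div_iff (mul_ne_zero hy hd)]
    linear_combination (y - u) * hβ - hη
  · rw [eq_div_iff (mul_ne_zero hr hd)]
    linear_combination (x - r) * hβ + hη
end

section
/- Let x, y, r, u be real numbers with y ≠ 0, r ≠ 0, r + u − x − y ≠ 0, xu − ry ≠ 0 and rx + 2ry + yu ≠ 0. Define, for real w and q, B(w, q) = (2(rx + 2ry + yu) + rw + yq) / (rx + 2ry + yu) and H(w, q) = (rw(y − u) + qy(r − x) + (ry − xu)(2r + 2y)) / ((rx + 2ry + yu)(xu − ry)). Then the map (w, q) ↦ (B(w, q), H(w, q)) is injective: if B(w, q) = B(w', q') and H(w, q) = H(w', q'), then w = w' and q = q'. Hence two BMMPP₂(2) representations with the same matrix D0 = [[x, y], [r, u]] and the same values of the moments β1 and η must have identical matrices D1 and D2. -/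
/-- The map (w, q) ↦ (β1, η) for a BMMPP₂(2) with fixed D0 is injective: two
representations with the same D0, β1 and η have identical D1 and D2. -/
theorem bmmpp2_moments_injective
    (x y r u : ℝ) (hy : y ≠ 0) (hr : r ≠ 0) (hd : r + u - x - y ≠ 0)
    (hdet : x*u - r*y ≠ 0) (hM : r*x + 2*r*y + y*u ≠ 0)
    (w q w' q' : ℝ)
    (hB : (2*(r*x + 2*r*y + y*u) + r*w + y*q) / (r*x + 2*r*y + y*u)
        = (2*(r*x + 2*r*y + y*u) + r*w' + y*q') / (r*x + 2*r*y + y*u))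
    (hH : (r*w*(y - u) + q*y*(r - x) + (r*y - x*u)*(2*r + 2*y))
            / ((r*x + 2*r*y + y*u)*(x*u - r*y))
        = (r*w'*(y - u) + q'*y*(r - x) + (r*y - x*u)*(2*r + 2*y))
            / ((r*x + 2*r*y + y*u)*(x*u - r*y))) :
    w = w' ∧ q = q' := by
  have hprod : (r*x + 2*r*y + y*u)*(x*u - r*y) ≠ 0 := mul_ne_zero hM hdet
  have h1 : r*w + y*q = r*w' + y*q' := by
    rw [div_left_inj' hM] at hB
    linarith
  have h2 : r*w*(y - u) + q*y*(r - x) = r*w'*(y - u) + q'*y*(r - x) := by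
    rw [div_left_inj' hprod] at hH
    linarith
  have hw : w = w' := by
    have key : r*(w - w') * (r + u - x - y) = 0 := by
      linear_combination (r - x) * h1 - h2
    have := mul_eq_zero.mp key
    rcases this with h | h
    · rcases mul_eq_zero.mp h with h | h
      · exact absurd h hr
      · linarith
    · exact absurd h hd
  refine ⟨hw, ?_⟩
  subst hw
  have : y*(q - q') = 0 := by linarith
  rcases mul_eq_zero.mp this with h | h
  · exact absurd h hy
  · linarith
end

section
/- Let x, y, r, u be real numbers with y ≠ 0, r ≠ 0, r + y ≠ 0, r + u − x − y ≠ 0, xu − ry ≠ 0 and rx + 2ry + yu ≠ 0. Set D0 = [[x, y], [r, u]], D = diag(−x − y, −r − u), e = (1,1)ᵀ, π = (r/(r+y), y/(r+y)) and φ = (π D e)⁻¹ π D. Let K ≥ 2 and let (D_1, …, D_K) and (D̂_1, …, D̂_K) be two K-tuples of real 2×2 diagonal matrices with Σ_{k=1}^K D_k = D = Σ_{k=1}^K D̂_k. If for every i = 1, …, K−1 one has φ(−D0)⁻¹(D_i + 2(D − D_i))e = φ(−D0)⁻¹(D̂_i + 2(D − D̂_i))e and φ(−D0)⁻¹(−D0)⁻¹(D_i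 + 2(D − D_i))e = φ(−D0)⁻¹(−D0)⁻¹(D̂_i + 2(D − D̂_i))e, then D_i = D̂_i for every i = 1, …, K. In other words, a BMMPP₂(K) with fixed matrix D0 is completely determined by the 2(K−1) moments β1^(i), η^(i), i = 1, …, K−1, of its aggregated two-batch processes. -/
set_option maxHeartbeats 1000000

open Matrix

/-- A BMMPP₂(K) with fixed matrix D0 is completely determined by the moments
β1^(i), η^(i), i = 1, …, K−1, of its aggregated two-batch processes. -/
theorem bmmppK_determined_by_aggregated_moments
    (x y r u : ℝ) (hy : y ≠ 0) (hr : r ≠ 0) (hry : r + y ≠ 0)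
    (hd : r + u - x - y ≠ 0) (hdet : x*u - r*y ≠ 0) (hM : r*x + 2*r*y + y*u ≠ 0)
    (D0 D : Matrix (Fin 2) (Fin 2) ℝ)
    (hD0 : D0 = !![x, y; r, u]) (hD : D = !![-x - y, 0; 0, -r - u])
    (e : Fin 2 → ℝ) (he : e = ![1, 1])
    (π : Fin 2 → ℝ) (hπ : π = ![r/(r+y), y/(r+y)])
    (φ : Fin 2 → ℝ) (hφ : φ = (π ⬝ᵥ D.mulVec e)⁻¹ • Matrix.vecMul π D)
    (K : ℕ) (hK : 2 ≤ K)
    (Dk Dk' : Fin K → Matrix (Fin 2) (Fin 2) ℝ)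
    (hdiag : ∀ k, (Dk k).IsDiag) (hdiag' : ∀ k, (Dk' k).IsDiag)
    (hsum : ∑ k, Dk k = D) (hsum' : ∑ k, Dk' k = D)
    (hmom : ∀ i : Fin K, (i : ℕ) < K - 1 →
      (Matrix.vecMul φ ((-D0)⁻¹ * (Dk i + (2:ℝ) • (D - Dk i))) ⬝ᵥ e
        = Matrix.vecMul φ ((-D0)⁻¹ * (Dk' i + (2:ℝ) • (D - Dk' i))) ⬝ᵥ e) ∧
      (Matrix.vecMul φ ((-D0)⁻¹ * (-D0)⁻¹ * (Dk i + (2:ℝ) • (D - Dk i))) ⬝ᵥ e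
        = Matrix.vecMul φ ((-D0)⁻¹ * (-D0)⁻¹ * (Dk' i + (2:ℝ) • (D - Dk' i))) ⬝ᵥ e)) :
    ∀ i, Dk i = Dk' i := by
  set t := r*x + 2*r*y + y*u with htdef
  set d := x*u - r*y with hddef
  have hMinv : (-D0)⁻¹ = d⁻¹ • !![-u, y; r, -x] := by
    rw [hD0]
    apply inv_eq_right_inv
    ext i j
    fin_cases i <;> fin_cases j <;>
      simp [Matrix.mul_apply, Fin.sum_univ_two] <;> field_simp [hdet] <;> ring
  have hc : (π ⬝ᵥ D.mulVec e) = -t/(r+y) := by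
    rw [hD, he, hπ]
    simp [Matrix.mulVec, dotProduct, Fin.sum_univ_two, htdef]
    field_simp
    ring
  have hπD : Matrix.vecMul π D = ![-(r*(x+y))/(r+y), -(y*(r+u))/(r+y)] := by
    rw [hD, hπ]
    ext j
    fin_cases j <;> simp [Matrix.vecMul, dotProduct, Fin.sum_univ_two] <;> ring
  have hφval : φ = ![r*(x+y)/t, y*(r+u)/t] := by
    rw [hφ, hc, hπD]
    ext j
    fin_cases j <;> simp [inv_div] <;> field_simp [hM] <;> ring
  have hv : Matrix.vecMul φ (-D0)⁻¹ = ![-r/t, -y/t] := by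
    rw [hφval, hMinv]
    ext j
    fin_cases j <;>
      simp [Matrix.vecMul, dotProduct, Fin.sum_univ_two] <;> field_simp [hM, hdet] <;> ring
  have hw : Matrix.vecMul φ ((-D0)⁻¹ * (-D0)⁻¹)
      = ![r*(u-y)/(t*d), y*(x-r)/(t*d)] := by
    rw [← Matrix.vecMul_vecMul, hv, hMinv]
    ext j
    fin_cases j <;>
      simp [Matrix.vecMul, dotProduct, Fin.sum_univ_two] <;> field_simp [hM, hdet] <;> ring
  -- reduction of moments to scalar form
  have hred1 : ∀ A : Matrix (Fin 2) (Fin 2) ℝ, A.IsDiag →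
      t * (Matrix.vecMul φ ((-D0)⁻¹ * (A + (2:ℝ) • (D - A))) ⬝ᵥ e)
        = -r*(2*(-x-y) - A 0 0) + -y*(2*(-r-u) - A 1 1) := by
    intro A hA
    have h01 : A 0 1 = 0 := hA (by decide)
    have h10 : A 1 0 = 0 := hA (by decide)
    rw [← Matrix.vecMul_vecMul, hv, he, hD]
    simp [Matrix.vecMul, dotProduct, Fin.sum_univ_two, Matrix.add_apply,
      Matrix.smul_apply, Matrix.sub_apply, h01, h10]
    field_simp [hM]
    ring
  have hred2 : ∀ A : Matrix (Fin 2) (Fin 2) ℝ, A.IsDiag →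
      (t*d) * (Matrix.vecMul φ ((-D0)⁻¹ * (-D0)⁻¹ * (A + (2:ℝ) • (D - A))) ⬝ᵥ e)
        = r*(u-y)*(2*(-x-y) - A 0 0) + y*(x-r)*(2*(-r-u) - A 1 1) := by
    intro A hA
    have h01 : A 0 1 = 0 := hA (by decide)
    have h10 : A 1 0 = 0 := hA (by decide)
    rw [← Matrix.vecMul_vecMul, hw, he, hD]
    simp [Matrix.vecMul, dotProduct, Fin.sum_univ_two, Matrix.add_apply,
      Matrix.smul_apply, Matrix.sub_apply, h01, h10]
    field_simp [hM, hdet]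
    ring
  -- key scalar deduction
  have key : ∀ p q p' q' : ℝ,
      (-r*(2*(-x-y) - p) + -y*(2*(-r-u) - q)
        = -r*(2*(-x-y) - p') + -y*(2*(-r-u) - q')) →
      (r*(u-y)*(2*(-x-y) - p) + y*(x-r)*(2*(-r-u) - q)
        = r*(u-y)*(2*(-x-y) - p') + y*(x-r)*(2*(-r-u) - q')) →
      p = p' ∧ q = q' := by
    intro p q p' q' e1 e2
    have h1 : r*p + y*q = r*p' + y*q' := by linear_combination e1
    have h2 : r*(u-y)*p + y*(x-r)*q = r*(u-y)*p' + y*(x-r)*q' := by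
      linear_combination -e2
    have hp : p = p' := by
      have h3 : r*(r+u-x-y)*(p - p') = 0 := by linear_combination (r-x)*h1 + h2
      have := mul_ne_zero hr hd
      rcases mul_eq_zero.mp h3 with h | h
      · exact absurd h this
      · linarith
    refine ⟨hp, ?_⟩
    have hq : y*(q - q') = 0 := by linear_combination h1 - r*hp
    rcases mul_eq_zero.mp hq with h | h
    · exact absurd h hy
    · linarith
  -- matrices from scalar equality
  have main : ∀ i : Fin K, (i : ℕ) < K - 1 → Dk i = Dk' i := by
    intro i hi
    obtain ⟨m1, m2⟩ := hmom i hi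
    have e1 := (hred1 (Dk i) (hdiag i)).symm.trans
      ((congrArg (fun z => t * z) m1).trans (hred1 (Dk' i) (hdiag' i)))
    have e2 := (hred2 (Dk i) (hdiag i)).symm.trans
      ((congrArg (fun z => (t*d) * z) m2).trans (hred2 (Dk' i) (hdiag' i)))
    obtain ⟨hp, hq⟩ := key _ _ _ _ e1 e2
    ext a b
    fin_cases a <;> fin_cases b
    · exact hp
    · rw [hdiag i (by decide), hdiag' i (by decide)]
    · rw [hdiag i (by decide), hdiag' i (by decide)]
    · exact hq
  intro i
  by_cases hi : (i : ℕ) < K - 1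
  · exact main i hi
  · have hival : (i : ℕ) = K - 1 := by omega
    have hsum2 : Dk i + ∑ k ∈ Finset.univ.erase i, Dk k = D := by
      rw [← hsum, Finset.add_sum_erase _ _ (Finset.mem_univ i)]
    have hsum2' : Dk' i + ∑ k ∈ Finset.univ.erase i, Dk' k = D := by
      rw [← hsum', Finset.add_sum_erase _ _ (Finset.mem_univ i)]
    have heq : ∑ k ∈ Finset.univ.erase i, Dk k = ∑ k ∈ Finset.univ.erase i, Dk' k := by
      apply Finset.sum_congr rfl
      intro j hj
      have hji : j ≠ i := Finset.ne_of_mem_erase hj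
      have : (j : ℕ) < K - 1 := by
        have := j.isLt
        have hne : (j : ℕ) ≠ K - 1 := fun h => hji (Fin.ext (h.trans hival.symm))
        omega
      exact main j this
    have := hsum2.trans hsum2'.symm
    rw [heq] at this
    exact add_right_cancel this
end

section
/- Let n ≥ 1 and K ≥ 1, let D0 be an invertible real n×n matrix and D a real n×n matrix such that (D0 + D)e = 0, where e is the all-ones column vector. Let p_1, …, p_K be nonnegative reals with p_1 + … + p_K = 1, set D_k = p_k·D for k = 1, …, K and D1* = Σ_{k=1}^K k·D_k. Then for every row vector φ with φ·e = 1 and every integer l ≥ 1: φ(−D0)⁻¹D1*·((−D0)⁻¹D)^{l−1}·(−D0)⁻¹D1*e = (Σ_{k=1}^K k·p_k)² = β1², where β1 = φ(−D0)⁻¹D1*e. Consequently, for a MAP with i.i.d. batch arrivals the lag-l autocovariance of the batch-size sequence, φ(−D0)⁻¹D1*[(−D0)⁻¹D]^{l−1}(−D0)⁻¹D1*e − β1², vanishes for every l ≥ 1; in particular the first-lag batch autocorrelation ρ_B(1) is zero. -/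
open Matrix

/-- For a MAP with i.i.d. batch arrivals, the lag-l autocovariance of the
batch-size sequence vanishes for every l ≥ 1; in particular ρ_B(1) = 0. -/
theorem iid_batches_zero_autocovariance
    (n K : ℕ) (hn : 1 ≤ n) (hK : 1 ≤ K)
    (D0 D : Matrix (Fin n) (Fin n) ℝ) (hD0 : IsUnit D0.det)
    (e : Fin n → ℝ) (he : e = fun _ => 1)
    (hQ : (D0 + D).mulVec e = 0)
    (p : Fin K → ℝ) (hp : ∀ k, 0 ≤ p k) (hp1 : ∑ k, p k = 1)
    (Dk : Fin K → Matrix (Fin n) (Fin n) ℝ) (hDk : ∀ k, Dk k = p k • D)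
    (Dstar : Matrix (Fin n) (Fin n) ℝ)
    (hDstar : Dstar = ∑ k : Fin K, (((k : ℕ) + 1 : ℝ)) • Dk k) :
    ∀ φ : Fin n → ℝ, φ ⬝ᵥ e = 1 → ∀ l : ℕ, 1 ≤ l →
      (Matrix.vecMul φ ((-D0)⁻¹ * Dstar * ((-D0)⁻¹ * D) ^ (l - 1)
            * ((-D0)⁻¹ * Dstar)) ⬝ᵥ e
          = (∑ k : Fin K, ((k : ℕ) + 1 : ℝ) * p k) ^ 2) ∧
      (Matrix.vecMul φ ((-D0)⁻¹ * Dstar * ((-D0)⁻¹ * D) ^ (l - 1)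
            * ((-D0)⁻¹ * Dstar)) ⬝ᵥ e
          = (Matrix.vecMul φ ((-D0)⁻¹ * Dstar) ⬝ᵥ e) ^ 2) := by
  intro φ hφ l hl
  set c : ℝ := ∑ k : Fin K, ((k : ℕ) + 1 : ℝ) * p k with hc
  set A : Matrix (Fin n) (Fin n) ℝ := (-D0)⁻¹ with hA
  -- (-D0) is invertible
  have hdet : IsUnit (-D0).det := by
    rw [Matrix.det_neg, Fintype.card_fin]
    exact (isUnit_one.neg.pow n).mul hD0
  have hinv : A * (-D0) = 1 := Matrix.nonsing_inv_mul _ hdet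
  -- Dstar = c • D
  have hDstar' : Dstar = c • D := by
    rw [hDstar, hc, Finset.sum_smul]
    congr 1
    ext k
    rw [hDk, smul_smul]
  -- D e = (-D0) e
  have hDe : D.mulVec e = (-D0).mulVec e := by
    have := hQ
    rw [Matrix.add_mulVec] at this
    have h := eq_neg_of_add_eq_zero_right this
    rw [h, Matrix.neg_mulVec]
  -- (A * D) e = e
  have hADe : (A * D).mulVec e = e := by
    rw [← Matrix.mulVec_mulVec, hDe, Matrix.mulVec_mulVec, hinv, Matrix.one_mulVec]
  -- (A * Dstar) e = c • e
  have hS : (A * Dstar).mulVec e = c • e := by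
    rw [hDstar', Matrix.mul_smul, Matrix.smul_mulVec, hADe]
  -- powers
  have hpow : ∀ m : ℕ, ((A * D) ^ m).mulVec e = e := by
    intro m
    induction m with
    | zero => simp
    | succ m ih =>
      rw [pow_succ, ← Matrix.mulVec_mulVec, hADe, ih]
  -- main computation
  have hM : ((A * Dstar * (A * D) ^ (l - 1) * (A * Dstar)).mulVec e) = (c * c) • e := by
    rw [← Matrix.mulVec_mulVec, hS, Matrix.mulVec_smul, ← Matrix.mulVec_mulVec,
      hpow, hS, smul_smul]
  have key : Matrix.vecMul φ (A * Dstar * (A * D) ^ (l - 1) * (A * Dstar)) ⬝ᵥ e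
      = c * c := by
    rw [← Matrix.dotProduct_mulVec, hM, dotProduct_smul, hφ, smul_eq_mul, mul_one]
  have hbeta : Matrix.vecMul φ (A * Dstar) ⬝ᵥ e = c := by
    rw [← Matrix.dotProduct_mulVec, hS, dotProduct_smul, hφ, smul_eq_mul, mul_one]
  constructor
  · rw [key, sq]
  · rw [key, hbeta, sq]
end
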